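/- arXiv:1503.04984 — 2 statements merged into one kernel-verified Lean document; each statement's English description precedes it below -/
import Mathlib

section
/- With c(j,n) := (−1)^(popcount of 2^n − j), for all 1 ≤ l ≤ n and 1 ≤ j ≤ 2^(n−l) one has c(2^l·j − 2^(l−1) + 1, n) = −c(2^l·j − 2^(l−1) + 1, n+1). -/
/-- Number of ones in the binary expansion. -/
def popcount (m : ℕ) : ℕ := (Nat.digits 2 m).count 1

/-- Sign of the `j`-th element of the `n`-th row (spectrally negative case). -/
def c (j n : ℕ) : ℤ := (-1) ^ popcount (2 ^ n - j)

lemma digits_len_le_of_lt_pow {m n : ℕ} (h : m < 2 ^ n) :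
    (Nat.digits 2 m).length ≤ n := by
  rcases eq_or_ne m 0 with rfl | hm
  · simp
  · rw [Nat.digits_len 2 m one_lt_two hm]
    have := Nat.log_lt_of_lt_pow hm h
    omega

lemma popcount_add_pow {m n : ℕ} (h : m < 2 ^ n) :
    popcount (m + 2 ^ n) = popcount m + 1 := by
  have hlen : (Nat.digits 2 m).length ≤ n := digits_len_le_of_lt_pow h
  have key := Nat.digits_append_zeroes_append_digits (b := 2)
    (k := n - (Nat.digits 2 m).length) (m := 1) (n := m) one_lt_two one_pos
  rw [Nat.add_sub_cancel' hlen] at key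
  unfold popcount
  rw [mul_one] at key
  rw [← key]
  simp [List.count_append, List.count_replicate]

theorem stmt_9 (n l j : ℕ) (hn : 1 ≤ n) (hl1 : 1 ≤ l) (hl2 : l ≤ n)
    (hj1 : 1 ≤ j) (hj2 : j ≤ 2 ^ (n - l)) :
    c (2 ^ l * j - 2 ^ (l - 1) + 1) n = - c (2 ^ l * j - 2 ^ (l - 1) + 1) (n + 1) := by
  set k := 2 ^ l * j - 2 ^ (l - 1) + 1 with hk
  have hpow : 2 ^ (l - 1) < 2 ^ l := Nat.pow_lt_pow_right one_lt_two (by omega)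
  have hkle : k ≤ 2 ^ n := by
    have h1 : 2 ^ l * j ≤ 2 ^ l * 2 ^ (n - l) := Nat.mul_le_mul_left _ hj2
    rw [← pow_add, Nat.add_sub_cancel' hl2] at h1
    have h2 : 2 ^ (l - 1) ≤ 2 ^ l * j := le_trans hpow.le (Nat.le_mul_of_pos_right _ hj1)
    have h3 := Nat.one_le_two_pow (n := l - 1)
    omega
  have hk1 : 1 ≤ k := by omega
  have hm : 2 ^ n - k < 2 ^ n := by
    have := Nat.one_le_two_pow (n := n); omega
  have hsplit : 2 ^ (n + 1) - k = (2 ^ n - k) + 2 ^ n := by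
    have : 2 ^ (n + 1) = 2 ^ n + 2 ^ n := by ring
    omega
  unfold c
  rw [hsplit, popcount_add_pow hm, pow_succ]
  ring
end

section
/- As l ranges over 2,…,k and j over 1,…,2^(k−l), the numbers 2^l·j − 2^(l−1) + 2 form a partition of the even numbers {4, 6, …, 2^k}: each even number in this set is represented exactly once, and for each l there are exactly 2^(k−l) such numbers. -/
lemma two_adic_unique {s u t v : ℕ} (hu : u % 2 = 1) (hv : v % 2 = 1)
    (h : 2 ^ s * u = 2 ^ t * v) : s = t ∧ u = v := by
  have hu0 : u ≠ 0 := by omega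
  have hv0 : v ≠ 0 := by omega
  have h2u : ¬ (2 ∣ u) := by omega
  have h2v : ¬ (2 ∣ v) := by omega
  have hs : s = t := by
    have h' := congrArg (Nat.factorization · 2) h
    simpa [Nat.factorization_mul (pow_ne_zero _ (two_ne_zero)) hu0,
      Nat.factorization_mul (pow_ne_zero _ (two_ne_zero)) hv0,
      Nat.Prime.factorization_pow Nat.prime_two,
      Nat.factorization_eq_zero_of_not_dvd h2u,
      Nat.factorization_eq_zero_of_not_dvd h2v] using h'
  subst hs
  exact ⟨rfl, Nat.eq_of_mul_eq_mul_left (pow_pos two_pos _) h⟩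

theorem stmt_11 (k : ℕ) (hk : 2 ≤ k) :
    (∀ m : ℕ, 4 ≤ m → m ≤ 2 ^ k → Even m →
      ∃! p : ℕ × ℕ, (2 ≤ p.1 ∧ p.1 ≤ k ∧ 1 ≤ p.2 ∧ p.2 ≤ 2 ^ (k - p.1)) ∧
        2 ^ p.1 * p.2 - 2 ^ (p.1 - 1) + 2 = m) ∧
    (∀ l : ℕ, 2 ≤ l → l ≤ k →
      ((Finset.Icc 1 (2 ^ (k - l))).image (fun j => 2 ^ l * j - 2 ^ (l - 1) + 2)).card
        = 2 ^ (k - l)) := by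
  constructor
  · intro m hm4 hmk hme
    set n := m - 2 with hn
    have hne : n % 2 = 0 := by obtain ⟨r, hr⟩ := hme; omega
    have hn0 : n ≠ 0 := by omega
    set a := n.factorization 2 with ha
    set b := n / 2 ^ a with hb
    have hab : 2 ^ a * b = n := Nat.ordProj_mul_ordCompl_eq_self n 2
    have hbodd : b % 2 = 1 :=
      Nat.two_dvd_ne_zero.mp (Nat.not_dvd_ordCompl Nat.prime_two hn0)
    have ha1 : 1 ≤ a := by
      have hdvd : 2 ∣ n := by omega
      have := Nat.Prime.factorization_pos_of_dvd Nat.prime_two hn0 hdvd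
      omega
    have hdvdn : 2 ^ a ∣ n := Nat.ordProj_dvd n 2
    have hak : a + 1 ≤ k := by
      by_contra h
      have h1 : 2 ^ k ≤ 2 ^ a := Nat.pow_le_pow_right (by norm_num) (by omega)
      have h2 : 2 ^ a ≤ n := Nat.le_of_dvd (by omega) hdvdn
      omega
    have hpow : 2 ^ a * 2 ^ (k - a) = 2 ^ k := by
      rw [← pow_add]; congr 1; omega
    have hblt : b < 2 ^ (k - a) := by
      by_contra h
      push_neg at h
      have : 2 ^ a * 2 ^ (k - a) ≤ 2 ^ a * b := Nat.mul_le_mul_left _ h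
      omega
    have hpowsplit : 2 ^ (k - a) = 2 * 2 ^ (k - (a + 1)) := by
      have h1 : k - a = (k - (a + 1)) + 1 := by omega
      rw [h1, pow_succ]; ring
    have hval : 2 ^ (a + 1) * ((b + 1) / 2) = 2 ^ a * b + 2 ^ a := by
      have hb1 : 2 * ((b + 1) / 2) = b + 1 := by omega
      calc 2 ^ (a + 1) * ((b + 1) / 2) = 2 ^ a * (2 * ((b + 1) / 2)) := by
            rw [pow_succ]; ring
        _ = 2 ^ a * (b + 1) := by rw [hb1]
        _ = 2 ^ a * b + 2 ^ a := by ring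
    clear_value a b
    refine ⟨(a + 1, (b + 1) / 2), ⟨⟨by omega, hak, by omega, ?_⟩, ?_⟩, ?_⟩
    · show (b + 1) / 2 ≤ 2 ^ (k - (a + 1))
      omega
    · show 2 ^ (a + 1) * ((b + 1) / 2) - 2 ^ (a + 1 - 1) + 2 = m
      have hA : a + 1 - 1 = a := by omega
      rw [hA]
      omega
    · rintro ⟨l, j⟩ ⟨⟨hl2, hlk, hj1, hjle⟩, heq⟩
      simp only at hl2 hlk hj1 hjle heq
      have hpl : 2 ^ l = 2 * 2 ^ (l - 1) := by
        conv_lhs => rw [show l = (l - 1) + 1 from by omega]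
        rw [pow_succ]; ring
      have e2 : 2 ^ (l - 1) * (2 * j - 1) + 2 ^ (l - 1) = 2 ^ (l - 1) * (2 * j) := by
        conv_rhs => rw [show 2 * j = (2 * j - 1) + 1 from by omega]
        rw [Nat.mul_add, Nat.mul_one]
      have e3 : 2 ^ (l - 1) * (2 * j) = 2 ^ l * j := by rw [hpl]; ring
      have key : 2 ^ (l - 1) * (2 * j - 1) = 2 ^ a * b := by omega
      have hjodd : (2 * j - 1) % 2 = 1 := by omega
      obtain ⟨hla, hjb⟩ := two_adic_unique hjodd hbodd key
      simp only [Prod.mk.injEq]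
      constructor <;> omega
  · intro l hl2 hlk
    have hinj : Set.InjOn (fun j => 2 ^ l * j - 2 ^ (l - 1) + 2)
        (Finset.Icc 1 (2 ^ (k - l))) := by
      intro x hx y hy hxy
      simp only [Finset.coe_Icc, Set.mem_Icc] at hx hy
      dsimp only at hxy
      have hpl : 2 ^ l = 2 * 2 ^ (l - 1) := by
        conv_lhs => rw [show l = (l - 1) + 1 from by omega]
        rw [pow_succ]; ring
      have hX : 2 ^ (l - 1) * 1 ≤ 2 ^ (l - 1) * x := Nat.mul_le_mul_left _ hx.1
      have hY : 2 ^ (l - 1) * 1 ≤ 2 ^ (l - 1) * y := Nat.mul_le_mul_left _ hy.1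
      have hx2 : 2 ^ l * x = 2 * (2 ^ (l - 1) * x) := by rw [hpl]; ring
      have hy2 : 2 ^ l * y = 2 * (2 ^ (l - 1) * y) := by rw [hpl]; ring
      have hXY : 2 ^ (l - 1) * x = 2 ^ (l - 1) * y := by omega
      exact Nat.eq_of_mul_eq_mul_left (pow_pos two_pos _) hXY
    rw [Finset.card_image_of_injOn hinj, Nat.card_Icc, Nat.add_sub_cancel]
end
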